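/- arXiv:0704.2522 — 5 statements merged into one kernel-verified Lean document; each statement's English description precedes it below -/
import Mathlib

section
/- Let k be a commutative ring, M a k-module equipped with a k-bilinear associative multiplication ⋆, and M = ⊕_{n∈ℕ} M_n an internal direct sum decomposition of M as a k-module (with projections π_n). Let T : M → M be a k-linear map that is multiplicative for ⋆ (T(x ⋆ y) = T(x) ⋆ T(y)), and define the shifted law ⋆̄ as the k-bilinear map given by a ⋆̄ b := Σ_{α} π_α(a) ⋆ T^α(b), where T^α is the α-th iterate of T (so a ⋆̄ b = a ⋆ T^α(b) when a ∈ M_α). If the shifted law is graded for the decomposition, i.e. M_m ⋆̄ M_n ⊆ M_{m+n} for all m, n ∈ ℕ, then ⋆̄ is associative. -/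
/-- ** Statement 0 ** (shifting lemma): let `M` be a `k`-module with a bilinear associative
multiplication `mul`, an internal direct sum decomposition `M = ⨁ₙ ℳ n`, and a linear
multiplicative endomorphism `T`.  Define the shifted law
`a ⋆̄ b = Σ_α π_α a ⋆ T^α b` (where `π_α` is the projection onto `ℳ α`).
If the shifted law is graded for the decomposition, then it is associative. -/
theorem shifted_law_assoc (k M : Type*) [CommRing k] [AddCommGroup M] [Module k M]
    (mul : M →ₗ[k] M →ₗ[k] M)
    (hassoc : ∀ a b c : M, mul (mul a b) c = mul a (mul b c))
    (ℳ : ℕ → Submodule k M) [DirectSum.Decomposition ℳ]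
    (T : M →ₗ[k] M) (hT : ∀ x y : M, T (mul x y) = mul (T x) (T y))
    (smulbar : M → M → M)
    (hdef : ∀ a b : M, smulbar a b =
      DFinsupp.sumAddHom
        (fun α => ((mul.flip ((T ^ α) b)).comp (ℳ α).subtype).toAddMonoidHom)
        (DirectSum.decompose ℳ a))
    (hgraded : ∀ m n : ℕ, ∀ a ∈ ℳ m, ∀ b ∈ ℳ n, smulbar a b ∈ ℳ (m + n)) :
    ∀ a b c : M, smulbar (smulbar a b) c = smulbar a (smulbar b c) := by
  -- additivity in the left argument
  have hzero : ∀ b : M, smulbar 0 b = 0 := by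
    intro b
    rw [hdef]
    simp
  have hadd : ∀ x y b : M, smulbar (x + y) b = smulbar x b + smulbar y b := by
    intro x y b
    rw [hdef, hdef, hdef, DirectSum.decompose_add, map_add]
  -- the key computation: on homogeneous elements the law is a twisted product
  have hof : ∀ (α : ℕ) (a : M), a ∈ ℳ α → ∀ b : M, smulbar a b = mul a ((T ^ α) b) := by
    intro α a ha b
    rw [hdef]
    have : DirectSum.decompose ℳ a = DirectSum.of (fun i => ℳ i) α ⟨a, ha⟩ :=
      DirectSum.decompose_coe ℳ (⟨a, ha⟩ : ℳ α)
    rw [this]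
    erw [DFinsupp.sumAddHom_single]
    rfl
  -- iterates of T are multiplicative
  have hTpow : ∀ (α : ℕ) (x y : M), (T ^ α) (mul x y) = mul ((T ^ α) x) ((T ^ α) y) := by
    intro α
    induction α with
    | zero => intro x y; simp
    | succ n ih =>
        intro x y
        simp only [pow_succ, Module.End.mul_apply, hT, ih]
  intro a b c
  induction a using DirectSum.Decomposition.inductionOn ℳ with
  | zero => simp [hzero]
  | add x y hx hy => simp [hadd, hx, hy]
  | @homogeneous α m =>
    have hmα : (m : M) ∈ ℳ α := m.2
    induction b using DirectSum.Decomposition.inductionOn ℳ with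
    | zero =>
        rw [hof α m hmα 0, map_zero, map_zero, hzero, hof α m hmα, map_zero, map_zero]
    | add x y hx hy =>
        rw [hof α m hmα (x + y), map_add, map_add, hadd, ← hof α m hmα x, ← hof α m hmα y,
          hadd, hx, hy, hof α m hmα, hof α m hmα, hof α m hmα (smulbar x c + smulbar y c),
          map_add, map_add]
    | @homogeneous β n =>
        have hnβ : (n : M) ∈ ℳ β := n.2
        have h1 : smulbar (m : M) (n : M) ∈ ℳ (α + β) := hgraded α β m hmα n hnβ
        rw [hof (α + β) _ h1 c, hof α m hmα (n : M), hof α m hmα (smulbar (n : M) c),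
          hof β n hnβ c, hTpow, hassoc]
        congr 2
        rw [pow_add, Module.End.mul_apply]
end

section
/- The shifted concatenation ∗̄ is associative on L with the empty list [] as two-sided unit, so (L, ∗̄, []) is a monoid; moreover this monoid is free: calling l ∈ L ∗̄-irreducible when l ≠ [] and l admits no factorization l = u ∗̄ v with u and v both nonempty, every nonempty l ∈ L can be written in exactly one way as l = l_1 ∗̄ l_2 ∗̄ ⋯ ∗̄ l_r with every l_i ∗̄-irreducible. -/
open scoped TensorProduct

/-- A monomial: a nonzero finitely supported multi-index with support contained in `{1,2,…}`. -/
def Mon : Type := {m : ℕ →₀ ℕ // m ≠ 0 ∧ m 0 = 0}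

namespace Mon

/-- Product of monomials: pointwise addition of multi-indices. -/
noncomputable instance : Mul Mon :=
  ⟨fun a b =>
    ⟨a.1 + b.1, by
      constructor
      · intro h
        exact a.2.1 ((add_eq_zero.mp h).1)
      · simp [Finsupp.add_apply, a.2.2, b.2.2]⟩⟩

/-- The total degree (weight) of a monomial. -/
def w (m : Mon) : ℕ := m.1.sum fun _ v => v

/-- The set of variable indices occurring in a list of monomials. -/
def IndAlph (l : List Mon) : Finset ℕ := (l.map fun m => m.1.support).foldr (· ∪ ·) ∅

/-- The maximal variable index occurring in a list of monomials (`0` for the empty list). -/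
def maxInd (l : List Mon) : ℕ := (IndAlph l).sup id

/-- The embedding `i ↦ i + p` of `ℕ` into itself. -/
def addEmb (p : ℕ) : ℕ ↪ ℕ := ⟨fun i => i + p, fun a b h => by simpa using h⟩

/-- The shift `T_p` of a monomial: translate the support by `p`. -/
noncomputable def Tmon (p : ℕ) (m : Mon) : Mon :=
  ⟨m.1.embDomain (addEmb p), by
    refine ⟨fun h => m.2.1 (Finsupp.embDomain_eq_zero.mp h), ?_⟩
    by_cases hp : p = 0
    · subst hp
      have h0 : (Finsupp.embDomain (addEmb 0) m.1) ((addEmb 0) 0) = m.1 0 :=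
        Finsupp.embDomain_apply_self _ _ _
      simpa [addEmb] using h0.trans m.2.2
    · apply Finsupp.embDomain_notin_range
      rintro ⟨i, hi⟩
      simp only [addEmb, Function.Embedding.coeFn_mk] at hi
      change i + p = 0 at hi
      omega⟩

/-- Shifted concatenation of lists of monomials. -/
noncomputable def sconc (l₁ l₂ : List Mon) : List Mon := l₁ ++ l₂.map (Tmon (maxInd l₁))

/-- A list of monomials is compact when its alphabet has no holes:
`IndAlph l = {1,…,card (IndAlph l)}`. -/
def Compact (l : List Mon) : Prop := IndAlph l = Finset.Icc 1 (IndAlph l).card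

/-- The re-indexing function of a list `l` : on `IndAlph l` it is the unique strictly
increasing bijection onto `{1,…,card (IndAlph l)}` (extended injectively elsewhere). -/
noncomputable def phi (l : List Mon) (i : ℕ) : ℕ :=
  if h : i ∈ IndAlph l then
    (((IndAlph l).orderIsoOfFin rfl).symm ⟨i, h⟩ : Fin (IndAlph l).card) + 1
  else i + (IndAlph l).card + 1

lemma phi_pos (l : List Mon) (i : ℕ) : 1 ≤ phi l i := by
  unfold phi; split_ifs <;> omega

lemma phi_inj (l : List Mon) : Function.Injective (phi l) := by
  intro a b hab
  unfold phi at hab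
  split_ifs at hab with ha hb hb
  · have h1 : (((IndAlph l).orderIsoOfFin rfl).symm ⟨a, ha⟩) =
        (((IndAlph l).orderIsoOfFin rfl).symm ⟨b, hb⟩) := Fin.ext (by omega)
    have h2 := congrArg ((IndAlph l).orderIsoOfFin rfl) h1
    rw [OrderIso.apply_symm_apply, OrderIso.apply_symm_apply] at h2
    exact congrArg Subtype.val h2
  · have := (((IndAlph l).orderIsoOfFin rfl).symm ⟨a, ha⟩).isLt; omega
  · have := (((IndAlph l).orderIsoOfFin rfl).symm ⟨b, hb⟩).isLt; omega
  · omega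

/-- Action of the compacting operator of `l` on a single monomial. -/
noncomputable def cptMon (l : List Mon) (m : Mon) : Mon :=
  ⟨m.1.mapDomain (phi l), by
    constructor
    · intro h
      apply m.2.1
      exact Finsupp.mapDomain_injective (phi_inj l) (by simpa using h)
    · apply Finsupp.mapDomain_notin_range
      rintro ⟨i, hi⟩
      have := phi_pos l i
      omega⟩

/-- The compacting operator on lists of monomials. -/
noncomputable def cpt (l : List Mon) : List Mon := l.map (cptMon l)

/-- `sub l I` is the sublist of `l` consisting of the entries whose (1-based) position
belongs to `I`. -/
def sub (l : List Mon) (I : Finset ℕ) : List Mon :=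
  (List.range l.length).filterMap fun j => if j + 1 ∈ I then l[j]? else none

/-- `∗̄`-irreducible lists: nonempty and with no factorization into two nonempty lists. -/
def SIrred (l : List Mon) : Prop :=
  l ≠ [] ∧ ∀ u v : List Mon, l = sconc u v → u = [] ∨ v = []

end Mon

namespace Mon

lemma addEmb_apply (p i : ℕ) : addEmb p i = i + p := rfl

lemma Tmon_injective (p : ℕ) : Function.Injective (Tmon p) := by
  intro a b h
  exact Subtype.ext (Finsupp.embDomain_injective (addEmb p) (congrArg Subtype.val h))

lemma Tmon_Tmon (p q : ℕ) (m : Mon) : Tmon p (Tmon q m) = Tmon (q + p) m := by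
  apply Subtype.ext
  show Finsupp.embDomain (addEmb p) (Finsupp.embDomain (addEmb q) m.1) = Finsupp.embDomain (addEmb (q + p)) m.1
  rw [Finsupp.embDomain_eq_mapDomain, Finsupp.embDomain_eq_mapDomain, Finsupp.embDomain_eq_mapDomain,
    ← Finsupp.mapDomain_comp]
  congr 1
  funext i
  simp only [addEmb_apply, Function.comp, Function.comp_apply]
  omega

lemma Tmon_zero (m : Mon) : Tmon 0 m = m := by
  apply Subtype.ext
  show Finsupp.embDomain (addEmb 0) m.1 = m.1
  rw [Finsupp.embDomain_eq_mapDomain,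
    show ((addEmb 0 : ℕ ↪ ℕ) : ℕ → ℕ) = id from funext fun i => by simp [addEmb],
    Finsupp.mapDomain_id]

lemma IndAlph_nil : IndAlph [] = ∅ := rfl

lemma IndAlph_cons (m : Mon) (l : List Mon) :
    IndAlph (m :: l) = m.1.support ∪ IndAlph l := rfl

lemma IndAlph_append (l₁ l₂ : List Mon) :
    IndAlph (l₁ ++ l₂) = IndAlph l₁ ∪ IndAlph l₂ := by
  induction l₁ with
  | nil => simp [IndAlph_nil]
  | cons m t ih => simp only [List.cons_append, IndAlph_cons, ih, Finset.union_assoc]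

lemma IndAlph_map (p : ℕ) (l : List Mon) :
    IndAlph (l.map (Tmon p)) = (IndAlph l).map (addEmb p) := by
  induction l with
  | nil => simp [IndAlph_nil]
  | cons m t ih =>
    simp only [List.map_cons, IndAlph_cons, ih]
    rw [show (Tmon p m).1.support = m.1.support.map (addEmb p) from
      Finsupp.support_embDomain _ _, Finset.map_union]

lemma IndAlph_nonempty {l : List Mon} (h : l ≠ []) : (IndAlph l).Nonempty := by
  cases l with
  | nil => exact absurd rfl h
  | cons m t =>
    rw [IndAlph_cons]
    exact (Finsupp.support_nonempty_iff.mpr m.2.1).mono Finset.subset_union_left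

lemma maxInd_map {l : List Mon} (p : ℕ) (h : l ≠ []) :
    maxInd (l.map (Tmon p)) = maxInd l + p := by
  unfold maxInd
  rw [IndAlph_map, Finset.sup_map]
  obtain ⟨j, hj, hjs⟩ := Finset.exists_mem_eq_sup _ (IndAlph_nonempty h) id
  apply le_antisymm
  · apply Finset.sup_le
    intro i hi
    have h1 : id i ≤ (IndAlph l).sup id := Finset.le_sup hi
    simp only [Function.comp, addEmb_apply, id] at *
    omega
  · have h2 : (id ∘ (addEmb p)) j ≤ (IndAlph l).sup (id ∘ (addEmb p)) := Finset.le_sup hj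
    simp only [Function.comp, addEmb_apply, id] at *
    omega

lemma sconc_nil (a : List Mon) : sconc a [] = a := by simp [sconc]

lemma nil_sconc (a : List Mon) : sconc [] a = a := by
  have h : maxInd ([] : List Mon) = 0 := by simp [maxInd, IndAlph_nil]
  simp only [sconc, h, List.nil_append]
  conv_rhs => rw [← List.map_id a]
  exact List.map_congr_left fun m _ => Tmon_zero m

lemma maxInd_sconc (a b : List Mon) : maxInd (sconc a b) = maxInd a + maxInd b := by
  rcases eq_or_ne b [] with rfl | hb
  · rw [sconc_nil]
    simp [maxInd, IndAlph_nil]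
  · have h1 : maxInd (b.map (Tmon (maxInd a))) = maxInd b + maxInd a := maxInd_map _ hb
    show (IndAlph (a ++ b.map (Tmon (maxInd a)))).sup id = _
    rw [IndAlph_append, Finset.sup_union]
    show maxInd a ⊔ maxInd (b.map (Tmon (maxInd a))) = _
    rw [h1, sup_eq_right.mpr (by omega)]
    omega

lemma sconc_assoc (a b c : List Mon) : sconc (sconc a b) c = sconc a (sconc b c) := by
  have h := maxInd_sconc a b
  simp only [sconc] at h ⊢
  rw [h, List.map_append, List.map_map, List.append_assoc]
  congr 2
  apply List.map_congr_left
  intro m _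
  rw [show (Tmon (maxInd a) ∘ Tmon (maxInd b)) m = Tmon (maxInd a) (Tmon (maxInd b) m) from rfl,
    Tmon_Tmon, Nat.add_comm]

lemma sconc_prefix {x x' r r' : List Mon} (hx : x ≠ []) (hx' : SIrred x')
    (h : sconc x r = sconc x' r') (hlen : x.length ≤ x'.length) : x' = x := by
  have h1 : x' = (sconc x r).take x'.length := by
    rw [h]
    show x' = (x' ++ r'.map (Tmon (maxInd x'))).take x'.length
    rw [List.take_left]
  rw [show sconc x r = x ++ r.map (Tmon (maxInd x)) from rfl,
    List.take_append, List.take_of_length_le hlen,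
    ← List.map_take] at h1
  have h2 : x' = sconc x (r.take (x'.length - x.length)) := h1
  rcases hx'.2 _ _ h2 with h3 | h3
  · exact absurd h3 hx
  · rw [h2, h3, sconc_nil]

lemma sconc_cancel {x x' r r' : List Mon} (hx : SIrred x) (hx' : SIrred x')
    (h : sconc x r = sconc x' r') : x = x' ∧ r = r' := by
  have hxx' : x = x' := by
    rcases le_total x.length x'.length with hl | hl
    · exact (sconc_prefix hx.1 hx' h hl).symm
    · exact sconc_prefix hx'.1 hx h.symm hl
  subst hxx'
  refine ⟨rfl, ?_⟩
  simp only [sconc] at h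
  exact (List.map_injective_iff.mpr (Tmon_injective _)) (List.append_cancel_left h)

lemma foldr_sconc_append (fs gs : List (List Mon)) :
    (fs ++ gs).foldr sconc [] = sconc (fs.foldr sconc []) (gs.foldr sconc []) := by
  induction fs with
  | nil => simp [nil_sconc]
  | cons a t ih => simp only [List.cons_append, List.foldr_cons, ih, sconc_assoc]

lemma foldr_ne_nil {fs : List (List Mon)} (h : ∀ x ∈ fs, SIrred x) (hfs : fs ≠ []) :
    fs.foldr sconc [] ≠ [] := by
  cases fs with
  | nil => exact absurd rfl hfs
  | cons a t =>
    have ha : a ≠ [] := (h a (by simp)).1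
    intro hcon
    simp only [List.foldr_cons, sconc] at hcon
    exact ha (List.append_eq_nil_iff.mp hcon).1

lemma exists_fact : ∀ (n : ℕ) (l : List Mon), l.length = n → l ≠ [] →
    ∃ fs : List (List Mon), (∀ x ∈ fs, SIrred x) ∧ fs.foldr sconc [] = l := by
  intro n
  induction n using Nat.strong_induction_on with
  | _ n ih =>
    intro l hn hl
    by_cases hirr : SIrred l
    · exact ⟨[l], by simp [hirr], by simp [sconc_nil]⟩
    · have hex : ∃ u v, l = sconc u v ∧ u ≠ [] ∧ v ≠ [] := by
        unfold SIrred at hirr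
        push_neg at hirr
        obtain ⟨u, v, huv, hu, hv⟩ := hirr hl
        exact ⟨u, v, huv, hu, hv⟩
      obtain ⟨u, v, huv, hu, hv⟩ := hex
      have hlen : l.length = u.length + v.length := by
        rw [huv]; simp [sconc]
      have hu1 : 0 < u.length := List.length_pos_iff.mpr hu
      have hv1 : 0 < v.length := List.length_pos_iff.mpr hv
      obtain ⟨fu, hfu, hfu2⟩ := ih u.length (by omega) u rfl hu
      obtain ⟨fv, hfv, hfv2⟩ := ih v.length (by omega) v rfl hv
      refine ⟨fu ++ fv, ?_, ?_⟩
      · intro x hx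
        rcases List.mem_append.mp hx with h | h
        exacts [hfu x h, hfv x h]
      · rw [foldr_sconc_append, hfu2, hfv2, huv]

lemma fact_unique : ∀ fs₁ fs₂ : List (List Mon), (∀ x ∈ fs₁, SIrred x) →
    (∀ x ∈ fs₂, SIrred x) → fs₁.foldr sconc [] = fs₂.foldr sconc [] → fs₁ = fs₂ := by
  intro fs₁
  induction fs₁ with
  | nil =>
    intro fs₂ _ h2 heq
    cases fs₂ with
    | nil => rfl
    | cons x' t' => exact absurd heq.symm (foldr_ne_nil h2 (by simp))
  | cons x t ih =>
    intro fs₂ h1 h2 heq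
    cases fs₂ with
    | nil => exact absurd heq (foldr_ne_nil h1 (by simp))
    | cons x' t' =>
      simp only [List.foldr_cons] at heq
      obtain ⟨hx, hr⟩ := sconc_cancel (h1 x (by simp)) (h2 x' (by simp)) heq
      rw [hx, ih t' (fun y hy => h1 y (by simp [hy])) (fun y hy => h2 y (by simp [hy])) hr]

end Mon

/-- ** Statement 2 **: shifted concatenation makes the set of lists of monomials a monoid
with unit the empty list, and this monoid is free: every nonempty list factors uniquely
into `*`-irreducible lists. -/
theorem sconc_monoid_free :
    (∀ a b c : List Mon, Mon.sconc (Mon.sconc a b) c = Mon.sconc a (Mon.sconc b c)) ∧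
    (∀ a : List Mon, Mon.sconc [] a = a ∧ Mon.sconc a [] = a) ∧
    (∀ l : List Mon, l ≠ [] →
      ∃! fs : List (List Mon),
        (∀ x ∈ fs, Mon.SIrred x) ∧ fs.foldr Mon.sconc [] = l) := by
  refine ⟨Mon.sconc_assoc, fun a => ⟨Mon.nil_sconc a, Mon.sconc_nil a⟩, fun l hl => ?_⟩
  obtain ⟨fs, hfs1, hfs2⟩ := Mon.exists_fact l.length l rfl hl
  refine ⟨fs, ⟨hfs1, hfs2⟩, fun fs' ⟨h1, h2⟩ => ?_⟩
  exact Mon.fact_unique fs' fs h1 hfs1 (h2.trans hfs2.symm)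
end

section
/- Let A be a bialgebra over a commutative ring R with comultiplication Δ : A → A ⊗_R A, let P = {x ∈ A : Δ(x) = x ⊗ 1 + 1 ⊗ x} be the set of primitive elements, and let S be the R-subalgebra of A generated by P. Then S is a subcoalgebra of A in the sense that Δ(S) is contained in the R-submodule of A ⊗_R A spanned by the elements s ⊗ s' with s, s' ∈ S. -/
open scoped TensorProduct Pointwise

/-- ** Statement 14 **: in a bialgebra `A` over a commutative ring `R`, the subalgebra `S`
generated by the set of primitive elements is a subcoalgebra: the comultiplication maps `S`
into the `R`-span of the pure tensors `s ⊗ s'` with `s, s' ∈ S`. -/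
theorem adjoin_primitives_subcoalgebra (R A : Type*) [CommRing R] [Ring A]
    [Bialgebra R A] :
    ∀ x ∈ Algebra.adjoin R {a : A | Coalgebra.comul (R := R) a = a ⊗ₜ[R] 1 + 1 ⊗ₜ[R] a},
      Coalgebra.comul (R := R) x ∈
        Submodule.span R {t : A ⊗[R] A |
          ∃ s ∈ Algebra.adjoin R {a : A | Coalgebra.comul (R := R) a = a ⊗ₜ[R] 1 + 1 ⊗ₜ[R] a},
          ∃ s' ∈ Algebra.adjoin R {a : A | Coalgebra.comul (R := R) a = a ⊗ₜ[R] 1 + 1 ⊗ₜ[R] a},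
            t = s ⊗ₜ[R] s'} := by
  set P := {a : A | Coalgebra.comul (R := R) a = a ⊗ₜ[R] 1 + 1 ⊗ₜ[R] a} with hP
  set S := Algebra.adjoin R P with hS
  set G := {t : A ⊗[R] A | ∃ s ∈ S, ∃ s' ∈ S, t = s ⊗ₜ[R] s'} with hG
  have hGmul : G * G ⊆ G := by
    rintro t ⟨x, ⟨s, hs, s', hs', rfl⟩, y, ⟨u, hu, u', hu', rfl⟩, rfl⟩
    exact ⟨s * u, S.mul_mem hs hu, s' * u', S.mul_mem hs' hu',
      Algebra.TensorProduct.tmul_mul_tmul s u s' u'⟩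
  have hmulT : ∀ x y : A ⊗[R] A, x ∈ Submodule.span R G → y ∈ Submodule.span R G →
      x * y ∈ Submodule.span R G := by
    intro x y hx hy
    have := Submodule.mul_mem_mul hx hy
    rw [Submodule.span_mul_span] at this
    exact Submodule.span_le.mpr
      (fun t ht => Submodule.subset_span (hGmul ht)) this
  have hone : (1 : A ⊗[R] A) ∈ Submodule.span R G :=
    Submodule.subset_span ⟨1, S.one_mem, 1, S.one_mem, rfl⟩
  intro x hx
  induction hx using Algebra.adjoin_induction with
  | mem a ha =>
      rw [ha]
      exact Submodule.add_mem _
        (Submodule.subset_span ⟨a, Algebra.subset_adjoin ha, 1, S.one_mem, rfl⟩)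
        (Submodule.subset_span ⟨1, S.one_mem, a, Algebra.subset_adjoin ha, rfl⟩)
  | algebraMap r =>
      have : Coalgebra.comul (R := R) (algebraMap R A r) =
          algebraMap R (A ⊗[R] A) r := Bialgebra.comul_algebraMap r
      rw [this, Algebra.algebraMap_eq_smul_one]
      exact Submodule.smul_mem _ r hone
  | add x y _ _ hx hy =>
      rw [map_add]
      exact Submodule.add_mem _ hx hy
  | mul x y _ _ hx hy =>
      have : Coalgebra.comul (R := R) (x * y) =
          Coalgebra.comul (R := R) x * Coalgebra.comul (R := R) y :=
        Bialgebra.comul_mul x y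
      rw [this]
      exact hmulT _ _ hx hy
end

section
/- The twisted law ↑ is associative on k⟨A*⟩ ((x ↑ y) ↑ z = x ↑ (y ↑ z) for all x, y, z ∈ k⟨A*⟩), the empty list [] is a two-sided unit for ↑, and ↑ is graded for the weight: for all lists u, v ∈ A*, u ↑ v is a k-linear combination of lists of weight w(u) + w(v). -/
/-- Weight of a list: sum of the weights of its entries. -/
def wl {A : Type*} (w : A → ℕ) (l : List A) : ℕ := (l.map w).sum

/-- The twisted law `↑` on basis lists, with crossing parameter `qc` and
superposition parameter `qs`. -/
noncomputable def tw {A : Type*} [Mul A] (k : Type*) [CommRing k] (qc qs : k) (w : A → ℕ) :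
    List A → List A → (List A →₀ k)
  | u, [] => Finsupp.single u 1
  | [], b :: v => Finsupp.single (b :: v) 1
  | a :: u, b :: v =>
      Finsupp.mapDomain (a :: ·) (tw k qc qs w u (b :: v))
        + qc ^ (wl w (a :: u) * w b) • Finsupp.mapDomain (b :: ·) (tw k qc qs w (a :: u) v)
        + (qc ^ (wl w u * w b) * qs ^ (w a * w b)) •
            Finsupp.mapDomain ((a * b) :: ·) (tw k qc qs w u v)
  termination_by u v => u.length + v.length
  decreasing_by all_goals simp <;> omega

/-- The bilinear extension of the twisted law `↑` to the free module on lists. -/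
noncomputable def twL {A : Type*} [Mul A] (k : Type*) [CommRing k] (qc qs : k) (w : A → ℕ) :
    (List A →₀ k) →ₗ[k] (List A →₀ k) →ₗ[k] (List A →₀ k) :=
  Finsupp.lift _ k _ fun u => Finsupp.lift _ k _ fun v => tw k qc qs w u v

section Aux
set_option linter.unusedSectionVars false
variable {A : Type*} [Semigroup A] {k : Type*} [CommRing k] (qc qs : k) (w : A → ℕ)

lemma tw_nil_right (u : List A) : tw k qc qs w u [] = Finsupp.single u 1 := by rw [tw]
lemma tw_nil_left (v : List A) : tw k qc qs w [] v = Finsupp.single v 1 := by cases v <;> rw [tw]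
lemma tw_cons_cons (a b : A) (u v : List A) : tw k qc qs w (a :: u) (b :: v) =
      Finsupp.mapDomain (a :: ·) (tw k qc qs w u (b :: v))
        + qc ^ (wl w (a :: u) * w b) • Finsupp.mapDomain (b :: ·) (tw k qc qs w (a :: u) v)
        + (qc ^ (wl w u * w b) * qs ^ (w a * w b)) •
            Finsupp.mapDomain ((a * b) :: ·) (tw k qc qs w u v) := by rw [tw]

lemma wl_cons (a : A) (l : List A) : wl w (a :: l) = w a + wl w l := by simp [wl]

lemma twL_single_single (u v : List A) :
    twL k qc qs w (Finsupp.single u 1) (Finsupp.single v 1) = tw k qc qs w u v := by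
  simp [twL, Finsupp.lift_apply, Finsupp.sum_single_index]

lemma single_eq_smul (u : List A) (b : k) :
    (Finsupp.single u b : List A →₀ k) = b • Finsupp.single u 1 := by
  rw [Finsupp.smul_single', mul_one]

lemma twL_nil_left (x : List A →₀ k) : twL k qc qs w (Finsupp.single [] 1) x = x := by
  have h : twL k qc qs w (Finsupp.single ([] : List A) 1) = LinearMap.id := by
    apply Finsupp.lhom_ext
    intro v b
    rw [single_eq_smul v b, map_smul, twL_single_single, tw_nil_left, LinearMap.id_apply]
  rw [h, LinearMap.id_apply]

lemma twL_nil_right (x : List A →₀ k) : twL k qc qs w x (Finsupp.single [] 1) = x := by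
  have h : (twL k qc qs w).flip (Finsupp.single ([] : List A) 1) = LinearMap.id := by
    apply Finsupp.lhom_ext
    intro u b
    rw [LinearMap.flip_apply, single_eq_smul u b, map_smul, LinearMap.smul_apply,
      twL_single_single, tw_nil_right, LinearMap.id_apply]
  have := congrArg (fun f => f x) h
  simpa using this

lemma mem_single_support {u l : List A} (hl : l ∈ (Finsupp.single u (1:k)).support) : l = u := by
  have := Finsupp.support_single_subset hl
  simpa using this

lemma tw_graded_aux (hw : ∀ a b : A, w (a * b) = w a + w b) :
    ∀ n, ∀ u v : List A, u.length + v.length ≤ n →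
      ∀ l ∈ (tw k qc qs w u v).support, wl w l = wl w u + wl w v := by
  classical
  intro n
  induction n with
  | zero =>
    intro u v h l hl
    obtain ⟨hu, hv⟩ : u = [] ∧ v = [] := by
      constructor <;> (apply List.length_eq_zero_iff.mp; omega)
    subst hu; subst hv
    rw [tw_nil_right] at hl
    rw [mem_single_support hl]; simp [wl]
  | succ n ih =>
    intro u v h l hl
    match u, v with
    | u, [] =>
      rw [tw_nil_right] at hl
      rw [mem_single_support hl]; simp [wl]
    | [], b :: v =>
      rw [tw_nil_left] at hl
      rw [mem_single_support hl]; simp [wl]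
    | a :: u, b :: v =>
      rw [tw_cons_cons] at hl
      have h1 := Finsupp.support_add hl
      simp only [Finset.mem_union] at h1
      rcases h1 with h1 | h1
      · rcases Finset.mem_union.mp (Finsupp.support_add h1) with h2 | h2
        · obtain ⟨l', hl', rfl⟩ := Finset.mem_image.mp (Finsupp.mapDomain_support h2)
          have := ih u (b :: v) (by simp at h ⊢; omega) l' hl'
          simp [wl_cons, this]; omega
        · have h3 := Finsupp.support_smul h2
          obtain ⟨l', hl', rfl⟩ := Finset.mem_image.mp (Finsupp.mapDomain_support h3)
          have := ih (a :: u) v (by simp at h ⊢; omega) l' hl'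
          simp [wl_cons] at this ⊢; omega
      · have h3 := Finsupp.support_smul h1
        obtain ⟨l', hl', rfl⟩ := Finset.mem_image.mp (Finsupp.mapDomain_support h3)
        have := ih u v (by simp at h ⊢; omega) l' hl'
        simp [wl_cons, hw] at this ⊢; omega


lemma twL_single (u v : List A) (b c : k) :
    twL k qc qs w (Finsupp.single u b) (Finsupp.single v c) = (b * c) • tw k qc qs w u v := by
  simp only [single_eq_smul u b, single_eq_smul v c, map_smul, LinearMap.smul_apply,
    twL_single_single]
  module

lemma consL_single (a c : A) (t s : List A) (b : k) :
    twL k qc qs w (Finsupp.single (a :: t) b) (Finsupp.single (c :: s) 1) =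
      Finsupp.mapDomain (a :: ·) (twL k qc qs w (Finsupp.single t b) (Finsupp.single (c :: s) 1))
      + qc ^ ((w a + wl w t) * w c) • Finsupp.mapDomain (c :: ·)
          (twL k qc qs w (Finsupp.single (a :: t) b) (Finsupp.single s 1))
      + (qc ^ (wl w t * w c) * qs ^ (w a * w c)) • Finsupp.mapDomain ((a * c) :: ·)
          (twL k qc qs w (Finsupp.single t b) (Finsupp.single s 1)) := by
  rw [twL_single, twL_single, twL_single, twL_single]
  simp only [mul_one]
  rw [tw_cons_cons, Finsupp.mapDomain_smul, Finsupp.mapDomain_smul, Finsupp.mapDomain_smul,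
    wl_cons]
  module

lemma consL (a c : A) (s : List A) (n : ℕ) (y : List A →₀ k)
    (hy : ∀ l ∈ y.support, wl w l = n) :
    twL k qc qs w (Finsupp.mapDomain (a :: ·) y) (Finsupp.single (c :: s) 1) =
      Finsupp.mapDomain (a :: ·) (twL k qc qs w y (Finsupp.single (c :: s) 1))
      + qc ^ ((w a + n) * w c) • Finsupp.mapDomain (c :: ·)
          (twL k qc qs w (Finsupp.mapDomain (a :: ·) y) (Finsupp.single s 1))
      + (qc ^ (n * w c) * qs ^ (w a * w c)) • Finsupp.mapDomain ((a * c) :: ·)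
          (twL k qc qs w y (Finsupp.single s 1)) := by
  classical
  induction y using Finsupp.induction with
  | zero => simp
  | single_add t b f ht hb ihf =>
    have hsupp : (Finsupp.single t b + f).support = insert t f.support := by
      rw [Finsupp.support_add_eq, Finsupp.support_single_ne_zero _ hb, ← Finset.insert_eq]
      rw [Finsupp.support_single_ne_zero _ hb]
      simpa using ht
    have hyt : wl w t = n := hy t (by rw [hsupp]; exact Finset.mem_insert_self _ _)
    have hyf : ∀ l ∈ f.support, wl w l = n := fun l hl =>
      hy l (by rw [hsupp]; exact Finset.mem_insert_of_mem hl)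
    specialize ihf hyf
    simp only [Finsupp.mapDomain_add, Finsupp.mapDomain_single, map_add, LinearMap.add_apply,
      ihf, consL_single qc qs w a c t s b, hyt]
    module

lemma consR (a c : A) (u : List A) (y : List A →₀ k) :
    twL k qc qs w (Finsupp.single (a :: u) 1) (Finsupp.mapDomain (c :: ·) y) =
      Finsupp.mapDomain (a :: ·) (twL k qc qs w (Finsupp.single u 1) (Finsupp.mapDomain (c :: ·) y))
      + qc ^ (wl w (a :: u) * w c) • Finsupp.mapDomain (c :: ·)
          (twL k qc qs w (Finsupp.single (a :: u) 1) y)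
      + (qc ^ (wl w u * w c) * qs ^ (w a * w c)) • Finsupp.mapDomain ((a * c) :: ·)
          (twL k qc qs w (Finsupp.single u 1) y) := by
  induction y using Finsupp.induction_linear with
  | zero => simp
  | add f g hf hg =>
    simp only [Finsupp.mapDomain_add, map_add, hf, hg]
    module
  | single t b =>
    rw [Finsupp.mapDomain_single, twL_single, twL_single, twL_single, twL_single]
    simp only [one_mul]
    rw [tw_cons_cons, Finsupp.mapDomain_smul, Finsupp.mapDomain_smul, Finsupp.mapDomain_smul]
    module


lemma mapDomain_sub' (f : List A → List A) (x y : List A →₀ k) :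
    Finsupp.mapDomain f (x - y) = Finsupp.mapDomain f x - Finsupp.mapDomain f y :=
  map_sub (Finsupp.mapDomain.addMonoidHom f) x y

lemma key (hw : ∀ a b : A, w (a * b) = w a + w b) :
    ∀ n, ∀ u v s : List A, u.length + v.length + s.length ≤ n →
      twL k qc qs w (tw k qc qs w u v) (Finsupp.single s 1) =
        twL k qc qs w (Finsupp.single u 1) (tw k qc qs w v s) := by
  intro n
  induction n with
  | zero =>
    intro u v s h
    have h1 : u.length = 0 := by omega
    have h2 : v.length = 0 := by omega
    have h3 : s.length = 0 := by omega
    obtain rfl := List.length_eq_zero_iff.mp h1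
    obtain rfl := List.length_eq_zero_iff.mp h2
    obtain rfl := List.length_eq_zero_iff.mp h3
    rw [tw_nil_right]
  | succ n ih =>
    intro u v s h
    match v with
    | [] => rw [tw_nil_right, tw_nil_left]
    | b :: v =>
      match u with
      | [] => rw [tw_nil_left, twL_nil_left, twL_single_single]
      | a :: u =>
        match s with
        | [] => rw [twL_nil_right, tw_nil_right, twL_single_single]
        | c :: s =>
          -- graded facts
          have g1 := tw_graded_aux qc qs w hw (u.length + (b :: v).length) u (b :: v) le_rfl
          have g2 := tw_graded_aux qc qs w hw ((a :: u).length + v.length) (a :: u) v le_rfl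
          have g3 := tw_graded_aux qc qs w hw (u.length + v.length) u v le_rfl
          -- induction hypotheses
          have i1 := ih u (b :: v) (c :: s) (by simp at h ⊢; omega)
          have i2 := ih (a :: u) v (c :: s) (by simp at h ⊢; omega)
          have i3 := ih u v (c :: s) (by simp at h ⊢; omega)
          have i4 := ih u (b :: v) s (by simp at h ⊢; omega)
          have i5 := ih (a :: u) v s (by simp at h ⊢; omega)
          have i6 := ih u v s (by simp at h ⊢; omega)
          have imid := ih (a :: u) (b :: v) s (by simp at h ⊢; omega)
          have hmid : twL k qc qs w (Finsupp.mapDomain (a :: ·) (tw k qc qs w u (b :: v)))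
              (Finsupp.single s 1)
              = twL k qc qs w (Finsupp.single (a :: u) 1) (tw k qc qs w (b :: v) s)
                - qc ^ (wl w (a :: u) * w b) • twL k qc qs w
                    (Finsupp.mapDomain (b :: ·) (tw k qc qs w (a :: u) v)) (Finsupp.single s 1)
                - (qc ^ (wl w u * w b) * qs ^ (w a * w b)) • twL k qc qs w
                    (Finsupp.mapDomain ((a * b) :: ·) (tw k qc qs w u v)) (Finsupp.single s 1) := by
            rw [tw_cons_cons] at imid
            simp only [map_add, LinearMap.add_apply, map_smul, LinearMap.smul_apply] at imid
            rw [eq_sub_iff_add_eq, eq_sub_iff_add_eq, ← imid]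
            module
          rw [tw_cons_cons qc qs w a b u v]
          simp only [map_add, LinearMap.add_apply, map_smul, LinearMap.smul_apply]
          rw [consL qc qs w a c s _ _ g1, consL qc qs w b c s _ _ g2,
            consL qc qs w (a * b) c s _ _ g3]
          rw [hmid, i1, i2, i3, i4, i5, i6]
          rw [tw_cons_cons qc qs w b c v s]
          simp only [map_add, map_smul, Finsupp.mapDomain_add, Finsupp.mapDomain_smul,
            mapDomain_sub', smul_sub]
          rw [consR qc qs w a b u (tw k qc qs w v (c :: s)),
            consR qc qs w a c u (tw k qc qs w (b :: v) s),
            consR qc qs w a (b * c) u (tw k qc qs w v s)]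
          rw [mul_assoc a b c]
          simp only [wl_cons, hw, add_mul, mul_add, pow_add]
          module

end Aux

/-- ** Statement 15 **: for a semigroup `A` with additive weight `w`, the twisted law `↑`
is associative on `k⟨A*⟩`, the empty list is a two-sided unit for it, and it is graded:
`u ↑ v` is a linear combination of lists of weight `w u + w v`. -/
theorem twisted_law_assoc_unit_graded (A : Type*) [Semigroup A] (w : A → ℕ)
    (hw : ∀ a b : A, w (a * b) = w a + w b) (k : Type*) [CommRing k] (qc qs : k) :
    (∀ x y z : List A →₀ k,
        twL k qc qs w (twL k qc qs w x y) z = twL k qc qs w x (twL k qc qs w y z)) ∧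
    (∀ x : List A →₀ k,
        twL k qc qs w (Finsupp.single [] 1) x = x ∧ twL k qc qs w x (Finsupp.single [] 1) = x) ∧
    (∀ u v : List A, ∀ l ∈ (tw k qc qs w u v).support, wl w l = wl w u + wl w v) := by
  have key' : ∀ u v s : List A,
      twL k qc qs w (tw k qc qs w u v) (Finsupp.single s 1) =
        twL k qc qs w (Finsupp.single u 1) (tw k qc qs w v s) := fun u v s =>
    key qc qs w hw (u.length + v.length + s.length) u v s le_rfl
  refine ⟨?_, fun x => ⟨twL_nil_left qc qs w x, twL_nil_right qc qs w x⟩,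
    fun u v => tw_graded_aux qc qs w hw (u.length + v.length) u v le_rfl⟩
  have base : ∀ u v s : List A,
      twL k qc qs w (twL k qc qs w (Finsupp.single u 1) (Finsupp.single v 1)) (Finsupp.single s 1)
        = twL k qc qs w (Finsupp.single u 1)
            (twL k qc qs w (Finsupp.single v 1) (Finsupp.single s 1)) := by
    intro u v s
    rw [twL_single_single, twL_single_single, key' u v s]
  intro x y z
  induction z using Finsupp.induction_linear with
  | zero => simp
  | add f g hf hg => simp only [map_add, hf, hg]
  | single s cs =>
    induction y using Finsupp.induction_linear with
    | zero => simp
    | add f g hf hg => simp only [map_add, LinearMap.add_apply, hf, hg]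
    | single v cv =>
      induction x using Finsupp.induction_linear with
      | zero => simp
      | add f g hf hg => simp only [map_add, LinearMap.add_apply, hf, hg]
      | single u cu =>
        rw [single_eq_smul u cu, single_eq_smul v cv, single_eq_smul s cs]
        simp only [map_smul, LinearMap.smul_apply]
        rw [base u v s]
end

section
/- For all admissible lists u and v of positive integers: the defining series of ζ(u) and ζ(v) are summable, every list occurring with nonzero coefficient in the stuffle product st(u,v) is admissible, and ζ(u) · ζ(v) = ζ̄(st(u,v)), where ζ̄ is the ℤ-linear extension of ζ to the free ℤ-module on admissible lists. -/
/-- A list of positive integers is admissible when it is empty or its first entry is `≥ 2`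
(entries are required to be positive). -/
def Adm (s : List ℕ) : Prop :=
  (∀ a ∈ s, 1 ≤ a) ∧ ∀ a : ℕ, s.head? = some a → 2 ≤ a

/-- The summand of the Euler–Zagier sum `ζ(s)`, indexed by strictly decreasing tuples
`n 0 > n 1 > ⋯ > n (k-1) ≥ 1` of positive integers: `∏ j, n j ^ (-s j)`. -/
noncomputable def zetaTerm (s : List ℕ)
    (n : {f : Fin s.length → ℕ // StrictAnti f ∧ ∀ j, 1 ≤ f j}) : ℝ :=
  ∏ j : Fin s.length, ((n.1 j : ℝ) ^ s.get j)⁻¹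

/-- The Euler–Zagier sum (multiple zeta value) of a list of positive integers. -/
noncomputable def zeta (s : List ℕ) : ℝ := ∑' n, zetaTerm s n

/-- The stuffle (quasi-shuffle) product of two lists of positive integers, with values in
the free `ℤ`-module on lists; this is the twisted law `↑` at `q_c = q_s = 1` for the
semigroup `(ℕ⁺, +)` with weight the identity. -/
noncomputable def st : List ℕ → List ℕ → (List ℕ →₀ ℤ)
  | u, [] => Finsupp.single u 1
  | [], b :: v => Finsupp.single (b :: v) 1
  | a :: u, b :: v =>
      Finsupp.mapDomain (a :: ·) (st u (b :: v))
        + Finsupp.mapDomain (b :: ·) (st (a :: u) v)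
        + Finsupp.mapDomain ((a + b) :: ·) (st u v)
  termination_by u v => u.length + v.length
  decreasing_by all_goals simp <;> omega

/-- The `ℤ`-linear extension of `ζ` to formal `ℤ`-combinations of lists. -/
noncomputable def zetaBar (x : List ℕ →₀ ℤ) : ℝ := x.sum fun l c => (c : ℝ) * zeta l

/-! ### Auxiliary development -/

open scoped ENNReal

namespace StuffleAux

/-- ℕ-valued stuffle product. -/
noncomputable def stN : List ℕ → List ℕ → (List ℕ →₀ ℕ)
  | u, [] => Finsupp.single u 1
  | [], b :: v => Finsupp.single (b :: v) 1
  | a :: u, b :: v =>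
      Finsupp.mapDomain (a :: ·) (stN u (b :: v))
        + Finsupp.mapDomain (b :: ·) (stN (a :: u) v)
        + Finsupp.mapDomain ((a + b) :: ·) (stN u v)
  termination_by u v => u.length + v.length
  decreasing_by all_goals simp <;> omega

lemma st_eq (u v : List ℕ) :
    st u v = (stN u v).mapRange (fun c : ℕ => (c : ℤ)) (by simp) := by
  induction u, v using stN.induct with
  | case1 u =>
      rw [st, stN, Finsupp.mapRange_single]
      norm_num
  | case2 b v =>
      rw [st, stN, Finsupp.mapRange_single]
      norm_num
  | case3 a u b v ih1 ih2 ih3 =>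
      rw [st, stN, ih1, ih2, ih3,
        Finsupp.mapDomain_mapRange _ _ _ _ (fun x y => by push_cast; ring),
        Finsupp.mapDomain_mapRange _ _ _ _ (fun x y => by push_cast; ring),
        Finsupp.mapDomain_mapRange _ _ _ _ (fun x y => by push_cast; ring),
        Finsupp.mapRange_add (by intro x y; push_cast; ring),
        Finsupp.mapRange_add (by intro x y; push_cast; ring)]

lemma st_apply (u v l : List ℕ) : st u v l = ((stN u v l : ℕ) : ℤ) := by
  rw [st_eq]; rfl

lemma support_st (u v : List ℕ) : (st u v).support = (stN u v).support := by
  rw [st_eq]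
  exact Finsupp.support_mapRange_of_injective (by simp) _ (Nat.cast_injective : Function.Injective (Nat.cast : ℕ → ℤ))

lemma stN_support_spec : ∀ u v : List ℕ, (∀ a ∈ u, 1 ≤ a) → (∀ a ∈ v, 1 ≤ a) →
    ∀ l ∈ (stN u v).support, (∀ a ∈ l, 1 ≤ a) ∧
      (∀ c : ℕ, l.head? = some c →
        u.head? = some c ∨ v.head? = some c ∨
          ∃ a b, u.head? = some a ∧ v.head? = some b ∧ c = a + b) := by
  intro u v
  induction u, v using stN.induct with
  | case1 u =>
      intro hu _ l hl
      rw [stN, Finsupp.support_single_ne_zero _ one_ne_zero, Finset.mem_singleton] at hl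
      subst hl
      exact ⟨hu, fun c hc => Or.inl hc⟩
  | case2 b v =>
      intro _ hv l hl
      rw [stN, Finsupp.support_single_ne_zero _ one_ne_zero, Finset.mem_singleton] at hl
      subst hl
      exact ⟨hv, fun c hc => Or.inr (Or.inl hc)⟩
  | case3 a u b v ih1 ih2 ih3 =>
      intro hu hv l hl
      classical
      rw [stN] at hl
      have hl' := Finsupp.support_add hl
      have hu' : ∀ x ∈ u, 1 ≤ x := fun x hx => hu x (List.mem_cons_of_mem a hx)
      have hv' : ∀ x ∈ v, 1 ≤ x := fun x hx => hv x (List.mem_cons_of_mem b hx)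
      have ha : 1 ≤ a := hu a (List.mem_cons_self)
      have hb : 1 ≤ b := hv b (List.mem_cons_self)
      rcases Finset.mem_union.1 hl' with h12 | h3
      · rcases Finset.mem_union.1 (Finsupp.support_add h12) with h1 | h2
        · obtain ⟨l', hmem1, rfl⟩ := Finset.mem_image.1 (Finsupp.mapDomain_support h1)
          obtain ⟨hent, _⟩ := ih1 hu' hv l' hmem1
          refine ⟨?_, ?_⟩
          · intro x hx
            rcases List.mem_cons.1 hx with rfl | hx
            · exact ha
            · exact hent x hx
          · intro c hc
            simp only [List.head?_cons, Option.some.injEq] at hc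
            subst hc
            exact Or.inl rfl
        · obtain ⟨l', hmem2, rfl⟩ := Finset.mem_image.1 (Finsupp.mapDomain_support h2)
          obtain ⟨hent, _⟩ := ih2 hu hv' l' hmem2
          refine ⟨?_, ?_⟩
          · intro x hx
            rcases List.mem_cons.1 hx with rfl | hx
            · exact hb
            · exact hent x hx
          · intro c hc
            simp only [List.head?_cons, Option.some.injEq] at hc
            subst hc
            exact Or.inr (Or.inl rfl)
      · obtain ⟨l', hmem3, rfl⟩ := Finset.mem_image.1 (Finsupp.mapDomain_support h3)
        obtain ⟨hent, _⟩ := ih3 hu' hv' l' hmem3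
        refine ⟨?_, ?_⟩
        · intro x hx
          rcases List.mem_cons.1 hx with rfl | hx
          · omega
          · exact hent x hx
        · intro c hc
          simp only [List.head?_cons, Option.some.injEq] at hc
          subst hc
          exact Or.inr (Or.inr ⟨a, b, rfl, rfl, rfl⟩)

lemma st_support_adm (u v : List ℕ) (hu : Adm u) (hv : Adm v) :
    ∀ l ∈ (st u v).support, Adm l := by
  rw [support_st]
  intro l hl
  obtain ⟨h1, h2⟩ := stN_support_spec u v hu.1 hv.1 l hl
  refine ⟨h1, fun c hc => ?_⟩
  rcases h2 c hc with h | h | ⟨a, b, ha, hb, rfl⟩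
  · exact hu.2 c h
  · exact hv.2 c h
  · have ha1 : 1 ≤ a := hu.1 a (List.mem_of_mem_head? ha)
    have hb1 : 1 ≤ b := hv.1 b (List.mem_of_mem_head? hb)
    omega

/-! ### The `ℝ≥0∞`-valued sums -/

/-- The index type of the Euler–Zagier sum. -/
abbrev STy (s : List ℕ) := {f : Fin s.length → ℕ // StrictAnti f ∧ ∀ j, 1 ≤ f j}

/-- The summand, valued in `ℝ≥0∞`. -/
noncomputable def F (s : List ℕ) (n : STy s) : ℝ≥0∞ :=
  ∏ j : Fin s.length, ((n.1 j : ℝ≥0∞) ^ s.get j)⁻¹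

/-- Tuples with all entries `< m`. -/
def Tub (s : List ℕ) (m : ℕ) : Set (STy s) := {n | ∀ j, n.1 j < m}

noncomputable def Z (s : List ℕ) (m : ℕ) : ℝ≥0∞ := ∑' n : Tub s m, F s n

noncomputable def ZF (s : List ℕ) : ℝ≥0∞ := ∑' n, F s n

lemma F_ne_top (s : List ℕ) (n : STy s) : F s n ≠ ∞ := by
  refine ne_top_of_le_ne_top (?_ : (1:ℝ≥0∞) ≠ ∞) (Finset.prod_le_one ?_ ?_)
  · exact ENNReal.one_ne_top
  · intro j _; exact zero_le
  · intro j _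
    rw [ENNReal.inv_le_one]
    exact one_le_pow_of_one_le' (by exact_mod_cast n.2.2 j) _

lemma zetaTerm_eq (s : List ℕ) (n : STy s) : zetaTerm s n = (F s n).toReal := by
  rw [zetaTerm, F, ENNReal.toReal_prod]
  refine Finset.prod_congr rfl fun j _ => ?_
  rw [ENNReal.toReal_inv, ENNReal.toReal_pow, ENNReal.toReal_natCast]

/-- There is exactly one empty tuple. -/
lemma Z_nil (m : ℕ) : Z [] m = 1 := by
  have hlen : (List.length ([] : List ℕ)) = 0 := rfl
  have hF : ∀ x : Tub ([] : List ℕ) m, F [] x.1 = 1 := by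
    intro x
    rw [F]
    apply Finset.prod_eq_one
    intro j _
    exact absurd j.isLt (Nat.not_lt_zero _)
  have x₀ : Tub ([] : List ℕ) m := by
    refine ⟨⟨fun _ => 1, ?_, fun _ => le_rfl⟩, ?_⟩
    · intro i j hij
      exact absurd i.isLt (Nat.not_lt_zero _)
    · intro j
      exact absurd j.isLt (Nat.not_lt_zero _)
  have hsub : ∀ y : Tub ([] : List ℕ) m, y = x₀ := by
    intro y
    refine Subtype.ext (Subtype.ext (funext fun j => ?_))
    exact absurd j.isLt (Nat.not_lt_zero _)
  have h := tsum_eq_single (L := SummationFilter.unconditional _) (f := fun x : Tub ([] : List ℕ) m => F [] x) x₀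
    (fun y hy => absurd (hsub y) hy)
  rw [Z]
  exact h.trans (hF x₀)

lemma ZF_nil : ZF [] = 1 := by
  have hF : ∀ x : STy ([] : List ℕ), F [] x = 1 := by
    intro x
    rw [F]
    apply Finset.prod_eq_one
    intro j _
    exact absurd j.isLt (Nat.not_lt_zero _)
  have x₀ : STy ([] : List ℕ) := by
    refine ⟨fun _ => 1, ?_, fun _ => le_rfl⟩
    intro i j hij
    exact absurd i.isLt (Nat.not_lt_zero _)
  have hsub : ∀ y : STy ([] : List ℕ), y = x₀ := by
    intro y
    refine Subtype.ext (funext fun j => ?_)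
    exact absurd j.isLt (Nat.not_lt_zero _)
  have h := tsum_eq_single (L := SummationFilter.unconditional _) (f := fun x : STy ([] : List ℕ) => F [] x) x₀
    (fun y hy => absurd (hsub y) hy)
  rw [ZF]
  exact h.trans (hF x₀)

/-- Strict antitonicity of a `Fin.cons`. -/
lemma strictAnti_cons {k : ℕ} (n : ℕ) (g : Fin k → ℕ) (hg : StrictAnti g)
    (hlt : ∀ j, g j < n) : StrictAnti (Fin.cons n g : Fin (k + 1) → ℕ) := by
  intro i j hij
  induction j using Fin.cases with
  | zero => exact absurd hij (Fin.not_lt_zero i)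
  | succ j =>
    induction i using Fin.cases with
    | zero => simpa using hlt j
    | succ i => simpa using hg (Fin.succ_lt_succ_iff.mp hij)

/-- `Fin.prod_univ_succ` specialised to `Fin (a :: s).length`. -/
lemma prod_univ_cons {M : Type*} [CommMonoid M] (a : ℕ) (s : List ℕ)
    (h : Fin (a :: s).length → M) :
    ∏ j : Fin (a :: s).length, h j
      = h (0 : Fin (s.length + 1)) * ∏ j : Fin s.length, h (Fin.succ j) :=
  Fin.prod_univ_succ (fun j : Fin (s.length + 1) => h j)

/-- First entry of a truncated tuple. -/
def headMap (a : ℕ) (s : List ℕ) (m : ℕ) (x : Tub (a :: s) m) : {q // q ∈ Finset.Ico 1 m} :=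
  ⟨x.1.1 (0 : Fin (s.length + 1)),
    Finset.mem_Ico.2 ⟨x.1.2.2 (0 : Fin (s.length + 1)), x.2 (0 : Fin (s.length + 1))⟩⟩

/-- The fiber of `headMap` over `n` is equivalent to the tuples below `n`. -/
def fiberEquiv (a : ℕ) (s : List ℕ) (m : ℕ) (n : {q // q ∈ Finset.Ico 1 m}) :
    {x : Tub (a :: s) m // headMap a s m x = n} ≃ Tub s (n : ℕ) where
  toFun x :=
    ⟨⟨Fin.tail x.1.1.1,
      fun i j hij => x.1.1.2.1 (Fin.succ_lt_succ_iff.mpr hij),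
      fun j => x.1.1.2.2 j.succ⟩,
      fun j => by
        have h0 : x.1.1.1 (0 : Fin (s.length + 1)) = (n : ℕ) :=
          congrArg Subtype.val x.2
        exact h0 ▸ x.1.1.2.1 (Fin.succ_pos j)⟩
  invFun t :=
    ⟨⟨⟨Fin.cons (n : ℕ) t.1.1,
        strictAnti_cons _ _ t.1.2.1 t.2,
        fun j => by
          induction j using Fin.cases with
          | zero => simpa using (Finset.mem_Ico.1 n.2).1
          | succ j => simpa using t.1.2.2 j⟩,
      fun j => by
        induction j using Fin.cases with
        | zero => simpa using (Finset.mem_Ico.1 n.2).2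
        | succ j => simpa using (t.2 j).trans (Finset.mem_Ico.1 n.2).2⟩,
      Subtype.ext (by simp [headMap])⟩
  left_inv x := by
    refine Subtype.ext (Subtype.ext (Subtype.ext ?_))
    have h0 : x.1.1.1 (0 : Fin (s.length + 1)) = (n : ℕ) :=
      congrArg Subtype.val x.2
    show (Fin.cons (n : ℕ) (Fin.tail x.1.1.1) : Fin (s.length + 1) → ℕ) = x.1.1.1
    rw [← h0, Fin.cons_self_tail]
  right_inv t := by
    refine Subtype.ext (Subtype.ext ?_)
    show Fin.tail (Fin.cons (n : ℕ) t.1.1 : Fin (s.length + 1) → ℕ) = t.1.1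
    rw [Fin.tail_cons]

/-- The recursion for the truncated sums. -/
lemma Z_cons (a : ℕ) (s : List ℕ) (m : ℕ) :
    Z (a :: s) m = ∑ n ∈ Finset.Ico 1 m, ((n : ℝ≥0∞) ^ a)⁻¹ * Z s n := by
  classical
  rw [Z, ← Finset.tsum_subtype]
  rw [← (Equiv.sigmaFiberEquiv (headMap a s m)).tsum_eq, ENNReal.tsum_sigma']
  refine tsum_congr fun n => ?_
  rw [← (fiberEquiv a s m n).symm.tsum_eq]
  have hsummand : ∀ t : Tub s (n : ℕ),
      F (a :: s) ((Equiv.sigmaFiberEquiv (headMap a s m))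
          ⟨n, (fiberEquiv a s m n).symm t⟩ : STy (a :: s)) =
        ((n : ℝ≥0∞) ^ a)⁻¹ * F s t := by
    intro t
    have hx : (((Equiv.sigmaFiberEquiv (headMap a s m))
          ⟨n, (fiberEquiv a s m n).symm t⟩ : Tub (a :: s) m) : STy (a :: s)).1
        = (Fin.cons (n : ℕ) t.1.1 : Fin (s.length + 1) → ℕ) := rfl
    rw [F, F, prod_univ_cons a s]
    refine congrArg₂ (fun x y => x * y) ?_ ?_
    · rw [show (((Equiv.sigmaFiberEquiv (headMap a s m))
            ⟨n, (fiberEquiv a s m n).symm t⟩ : Tub (a :: s) m) : STy (a :: s)).1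
          (0 : Fin (s.length + 1)) = (n : ℕ) from hx ▸ Fin.cons_zero _ _]
      simp
    · refine Finset.prod_congr rfl fun j _ => ?_
      rw [show (((Equiv.sigmaFiberEquiv (headMap a s m))
            ⟨n, (fiberEquiv a s m n).symm t⟩ : Tub (a :: s) m) : STy (a :: s)).1
          (Fin.succ j) = t.1.1 j from hx ▸ Fin.cons_succ _ _ _]
      rfl
  calc ∑' t : Tub s (n : ℕ),
        F (a :: s) ((Equiv.sigmaFiberEquiv (headMap a s m))
          ⟨n, (fiberEquiv a s m n).symm t⟩ : STy (a :: s))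
      = ∑' t : Tub s (n : ℕ), ((n : ℝ≥0∞) ^ a)⁻¹ * F s t := tsum_congr hsummand
    _ = ((n : ℝ≥0∞) ^ a)⁻¹ * Z s n := by rw [ENNReal.tsum_mul_left, Z]

lemma Tub_subset (s : List ℕ) {m m' : ℕ} (hmm : m ≤ m') : Tub s m ⊆ Tub s m' :=
  fun y hy j => lt_of_lt_of_le (hy j) hmm

lemma indicator_mono' (s : List ℕ) (x : STy s) :
    Monotone fun m => (Tub s m).indicator (F s) x :=
  fun _ _ hmm =>
    Set.indicator_le_indicator_of_subset (Tub_subset s hmm) (fun _ => zero_le) x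

lemma Z_mono (s : List ℕ) : Monotone (Z s) := by
  intro m m' hmm
  rw [Z, Z, tsum_subtype, tsum_subtype]
  exact ENNReal.tsum_le_tsum fun x => indicator_mono' s x hmm

lemma iSup_indicator (s : List ℕ) (x : STy s) :
    ⨆ m, (Tub s m).indicator (F s) x = F s x := by
  refine le_antisymm (iSup_le fun m => ?_) ?_
  · exact Set.indicator_le_self' (fun _ _ => zero_le) x
  · have hx : x ∈ Tub s ((Finset.univ.sup x.1) + 1) := by
      intro j
      exact Nat.lt_succ_of_le (Finset.le_sup (Finset.mem_univ j))
    refine le_iSup_of_le ((Finset.univ.sup x.1) + 1) ?_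
    rw [Set.indicator_of_mem hx]

lemma ZF_eq_iSup (s : List ℕ) : ZF s = ⨆ m, Z s m := by
  have h1 : ∀ m, Z s m = ∑' x : STy s, (Tub s m).indicator (F s) x := by
    intro m; rw [Z, tsum_subtype]
  calc ZF s = ∑' x : STy s, ⨆ m, (Tub s m).indicator (F s) x := by
        rw [ZF]; exact tsum_congr fun x => (iSup_indicator s x).symm
    _ = ⨆ m, ∑' x : STy s, (Tub s m).indicator (F s) x := by
        refine le_antisymm ?_ (iSup_le fun m => ENNReal.tsum_le_tsum fun x =>
          le_iSup (fun m => (Tub s m).indicator (F s) x) m)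
        rw [ENNReal.tsum_eq_iSup_sum]
        refine iSup_le fun T => ?_
        rw [ENNReal.finsetSum_iSup_of_monotone (fun x => indicator_mono' s x)]
        exact iSup_mono fun m => ENNReal.sum_le_tsum T
    _ = ⨆ m, Z s m := by exact iSup_congr fun m => (h1 m).symm

/-! ### The finite trichotomy identity -/

lemma sum_mul_sum_trichotomy (m : ℕ) (f g : ℕ → ℝ≥0∞) :
    (∑ n ∈ Finset.Ico 1 m, f n) * (∑ p ∈ Finset.Ico 1 m, g p) =
      (∑ n ∈ Finset.Ico 1 m, f n * ∑ p ∈ Finset.Ico 1 n, g p)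
      + (∑ p ∈ Finset.Ico 1 m, (∑ n ∈ Finset.Ico 1 p, f n) * g p)
      + ∑ n ∈ Finset.Ico 1 m, f n * g n := by
  induction m with
  | zero => simp
  | succ m ih =>
      rcases Nat.eq_zero_or_pos m with rfl | hm
      · simp
      simp only [Finset.sum_Ico_succ_top (show 1 ≤ m from hm)]
      rw [add_mul, mul_add, mul_add, ih]
      ring

/-- Key step: evaluation of `mapDomain (a :: ·)` sums. -/
lemma sum_mapDomain_cons (a : ℕ) (x : List ℕ →₀ ℕ) (m : ℕ) :
    (Finsupp.mapDomain (a :: ·) x).sum (fun l c => (c : ℝ≥0∞) * Z l m)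
      = ∑ n ∈ Finset.Ico 1 m, ((n : ℝ≥0∞) ^ a)⁻¹
          * x.sum (fun l c => (c : ℝ≥0∞) * Z l n) := by
  rw [Finsupp.sum_mapDomain_index_inj (List.cons_injective (a := a))]
  simp only [Finsupp.sum, Z_cons, Finset.mul_sum]
  rw [Finset.sum_comm]
  refine Finset.sum_congr rfl fun n _ => Finset.sum_congr rfl fun l _ => by ring

lemma key (u v : List ℕ) : ∀ m : ℕ,
    Z u m * Z v m = (stN u v).sum fun l c => (c : ℝ≥0∞) * Z l m := by
  induction u, v using stN.induct with
  | case1 u =>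
      intro m
      rw [stN, Finsupp.sum_single_index (by simp), Z_nil]
      simp
  | case2 b v =>
      intro m
      rw [stN, Finsupp.sum_single_index (by simp), Z_nil]
      simp
  | case3 a u b v ih1 ih2 ih3 =>
      intro m
      have hadd : ∀ (l : List ℕ) (b₁ b₂ : ℕ),
          ((b₁ + b₂ : ℕ) : ℝ≥0∞) * Z l m = (b₁ : ℝ≥0∞) * Z l m + (b₂ : ℝ≥0∞) * Z l m := by
        intro l b₁ b₂; push_cast; ring
      rw [stN, Finsupp.sum_add_index' (by simp) hadd, Finsupp.sum_add_index' (by simp) hadd,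
        sum_mapDomain_cons, sum_mapDomain_cons, sum_mapDomain_cons]
      rw [Z_cons, Z_cons, sum_mul_sum_trichotomy]
      congr 1
      · congr 1
        · -- first piece
          refine Finset.sum_congr rfl fun n hn => ?_
          rw [← Z_cons, ← ih1 n]
          ring
        · -- second piece
          refine Finset.sum_congr rfl fun p hp => ?_
          rw [← Z_cons, ← ih2 p]
          ring
      · -- diagonal piece
        refine Finset.sum_congr rfl fun n hn => ?_
        rw [← ih3 n]
        have hn1 : 1 ≤ n := (Finset.mem_Ico.1 hn).1
        have hne0 : (n : ℝ≥0∞) ≠ 0 := by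
          exact_mod_cast Nat.cast_ne_zero.mpr (by omega)
        have h : ((n : ℝ≥0∞) ^ (a + b))⁻¹ = ((n : ℝ≥0∞) ^ a)⁻¹ * ((n : ℝ≥0∞) ^ b)⁻¹ := by
          rw [pow_add, ENNReal.mul_inv (Or.inl (pow_ne_zero a hne0))
            (Or.inl (ENNReal.pow_ne_top (ENNReal.natCast_ne_top n)))]
        rw [h]
        ring

/-! ### Passage to the limit -/

lemma iSup_mul_iSup_monotone (f g : ℕ → ℝ≥0∞) (hf : Monotone f) (hg : Monotone g) :
    (⨆ m, f m) * (⨆ m, g m) = ⨆ m, f m * g m := by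
  refine le_antisymm ?_ (iSup_le fun m => mul_le_mul' (le_iSup f m) (le_iSup g m))
  rw [ENNReal.iSup_mul]
  refine iSup_le fun i => ?_
  rw [ENNReal.mul_iSup]
  refine iSup_le fun j => ?_
  calc f i * g j ≤ f (max i j) * g (max i j) :=
        mul_le_mul' (hf (le_max_left i j)) (hg (le_max_right i j))
    _ ≤ ⨆ m, f m * g m := le_iSup (fun m => f m * g m) (max i j)

lemma keyInf (u v : List ℕ) :
    ZF u * ZF v = (stN u v).sum fun l c => (c : ℝ≥0∞) * ZF l := by
  rw [ZF_eq_iSup, ZF_eq_iSup, iSup_mul_iSup_monotone _ _ (Z_mono u) (Z_mono v),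
    iSup_congr (key u v)]
  simp only [Finsupp.sum]
  rw [← ENNReal.finsetSum_iSup_of_monotone
      (f := fun l m => (((stN u v) l : ℝ≥0∞)) * Z l m)
      (fun l _ _ hmm => mul_le_mul' le_rfl (Z_mono l hmm))]
  refine Finset.sum_congr rfl fun l _ => ?_
  rw [← ENNReal.mul_iSup, ZF_eq_iSup]

/-! ### Finiteness -/

/-- The pointwise comparison for admissible lists. -/
lemma F_le_bound (s : List ℕ) (hs : Adm s) (n : STy s) :
    F s n ≤ ∏ j : Fin s.length, ((n.1 j : ℝ≥0∞) ^ (1 + 1 / (s.length : ℝ)))⁻¹ := by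
  rcases s with _ | ⟨s₀, s'⟩
  · refine le_of_eq ?_
    rw [F]
    refine Finset.prod_congr rfl fun j _ => absurd j.isLt (Nat.not_lt_zero _)
  have hs₀ : 2 ≤ s₀ := hs.2 s₀ rfl
  have hk1 : 1 ≤ (s₀ :: s').length := by simp
  have hr0 : (0:ℝ) ≤ 1 + 1 / (((s₀ :: s').length : ℕ) : ℝ) := by positivity
  have hN1 : ∀ j : Fin (s₀ :: s').length, (1:ℝ≥0∞) ≤ ((n.1 j : ℕ) : ℝ≥0∞) := fun j => by
    exact_mod_cast n.2.2 j
  have hNne0 : ∀ j : Fin (s₀ :: s').length, ((n.1 j : ℕ) : ℝ≥0∞) ≠ 0 := fun j h => by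
    simpa [h] using hN1 j
  have hNnetop : ∀ j : Fin (s₀ :: s').length, ((n.1 j : ℕ) : ℝ≥0∞) ≠ ∞ := fun j =>
    ENNReal.natCast_ne_top _
  have h1r : ∀ j : Fin (s₀ :: s').length,
      (1:ℝ≥0∞) ≤ ((n.1 j : ℕ) : ℝ≥0∞) ^ (1 + 1 / (((s₀ :: s').length : ℕ) : ℝ)) := fun j => by
    have := ENNReal.rpow_le_rpow_of_exponent_le (hN1 j) hr0
    rwa [ENNReal.rpow_zero] at this
  rw [F, ← ENNReal.prod_inv_distrib (fun i _ j _ _ => Or.inl (pow_ne_zero _ (hNne0 i))),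
    ← ENNReal.prod_inv_distrib (fun i _ j _ _ => Or.inl (fun h0 => absurd (h1r i) (by rw [h0]; simp)))]
  rw [ENNReal.inv_le_inv]
  -- prove `∏ j, N j ^ r ≤ ∏ j, N j ^ s.get j`
  have hprodne0 : (∏ j : Fin (s₀ :: s').length, ((n.1 j : ℕ) : ℝ≥0∞)) ≠ 0 :=
    Finset.prod_ne_zero_iff.2 fun j _ => hNne0 j
  have hprodnetop : (∏ j : Fin (s₀ :: s').length, ((n.1 j : ℕ) : ℝ≥0∞)) ≠ ∞ :=
    ENNReal.prod_ne_top fun j _ => hNnetop j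
  have hstep2 : (∏ j : Fin (s₀ :: s').length, ((n.1 j : ℕ) : ℝ≥0∞))
        ^ (1 / (((s₀ :: s').length : ℕ) : ℝ))
      ≤ ((n.1 (0 : Fin (s'.length + 1)) : ℕ) : ℝ≥0∞) := by
    have hb : (∏ j : Fin (s₀ :: s').length, ((n.1 j : ℕ) : ℝ≥0∞))
        ≤ ((n.1 (0 : Fin (s'.length + 1)) : ℕ) : ℝ≥0∞) ^ ((s₀ :: s').length) := by
      calc (∏ j : Fin (s₀ :: s').length, ((n.1 j : ℕ) : ℝ≥0∞))
          ≤ ∏ _j : Fin (s₀ :: s').length, ((n.1 (0 : Fin (s'.length + 1)) : ℕ) : ℝ≥0∞) := by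
            refine Finset.prod_le_prod' fun j _ => ?_
            exact_mod_cast n.2.1.antitone (Fin.zero_le j)
        _ = ((n.1 (0 : Fin (s'.length + 1)) : ℕ) : ℝ≥0∞) ^ ((s₀ :: s').length) := by
            rw [Finset.prod_const, Finset.card_univ, Fintype.card_fin]
    calc (∏ j : Fin (s₀ :: s').length, ((n.1 j : ℕ) : ℝ≥0∞))
        ^ (1 / (((s₀ :: s').length : ℕ) : ℝ))
        ≤ (((n.1 (0 : Fin (s'.length + 1)) : ℕ) : ℝ≥0∞) ^ ((s₀ :: s').length))
            ^ (1 / (((s₀ :: s').length : ℕ) : ℝ)) :=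
          ENNReal.rpow_le_rpow hb (by positivity)
      _ = ((n.1 (0 : Fin (s'.length + 1)) : ℕ) : ℝ≥0∞) := by
          rw [← ENNReal.rpow_natCast _ ((s₀ :: s').length), ← ENNReal.rpow_mul,
            mul_one_div, div_self (Nat.cast_ne_zero.mpr (by simp)),
            ENNReal.rpow_one]
  have hstep1 : ∏ j : Fin (s₀ :: s').length,
        ((n.1 j : ℕ) : ℝ≥0∞) ^ (1 + 1 / (((s₀ :: s').length : ℕ) : ℝ))
      ≤ (∏ j : Fin (s₀ :: s').length, ((n.1 j : ℕ) : ℝ≥0∞)) * ((n.1 (0 : Fin (s'.length + 1)) : ℕ) : ℝ≥0∞) := by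
    rw [ENNReal.prod_rpow_of_nonneg hr0, ENNReal.rpow_add _ _ hprodne0 hprodnetop,
      ENNReal.rpow_one]
    exact mul_le_mul' le_rfl hstep2
  refine hstep1.trans ?_
  have hL : (∏ j : Fin (s₀ :: s').length, ((n.1 j : ℕ) : ℝ≥0∞)) * ((n.1 (0 : Fin (s'.length + 1)) : ℕ) : ℝ≥0∞)
      = ((n.1 (0 : Fin (s'.length + 1)) : ℕ) : ℝ≥0∞) ^ 2
        * ∏ j : Fin s'.length, ((n.1 j.succ : ℕ) : ℝ≥0∞) := by
    rw [prod_univ_cons s₀ s' (fun j => ((n.1 j : ℕ) : ℝ≥0∞))]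
    ring
  rw [hL, prod_univ_cons s₀ s'
    (fun j => ((n.1 j : ℕ) : ℝ≥0∞) ^ (s₀ :: s').get j)]
  refine mul_le_mul' ?_ ?_
  · exact pow_le_pow_right₀ (hN1 (0 : Fin (s'.length + 1))) hs₀
  · refine Finset.prod_le_prod' fun j _ => ?_
    have h1 : 1 ≤ (s₀ :: s').get j.succ := by
      refine hs.1 _ ?_
      exact List.get_mem _ _
    calc ((n.1 j.succ : ℕ) : ℝ≥0∞) = ((n.1 j.succ : ℕ) : ℝ≥0∞) ^ 1 := (pow_one _).symm
      _ ≤ ((n.1 j.succ : ℕ) : ℝ≥0∞) ^ ((s₀ :: s').get j.succ) :=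
          pow_le_pow_right₀ (hN1 j.succ) h1

/-! ### Summability comparison -/

/-- The comparison weight: `q ↦ q ^ (-r)` with the convention `0 ↦ 0`. -/
noncomputable def bfun (r : ℝ) : ℕ → ℝ≥0∞ :=
  fun q => if q = 0 then 0 else ((q : ℝ≥0∞) ^ r)⁻¹

/-- `Fin.cons` as an equivalence. -/
def consPiEquiv (k : ℕ) : (ℕ × (Fin k → ℕ)) ≃ (Fin (k + 1) → ℕ) where
  toFun p := Fin.cons p.1 p.2
  invFun f := (f 0, Fin.tail f)
  left_inv p := by simp
  right_inv f := Fin.cons_self_tail f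

lemma tsum_pi_prod (b : ℕ → ℝ≥0∞) : ∀ k : ℕ,
    (∑' f : Fin k → ℕ, ∏ j, b (f j)) = (∑' q, b q) ^ k := by
  intro k
  induction k with
  | zero =>
      have x₀ : Fin 0 → ℕ := fun j => j.elim0
      have h := tsum_eq_single (L := SummationFilter.unconditional _) (f := fun f : Fin 0 → ℕ => ∏ j, b (f j)) x₀
        (fun y hy => absurd (funext fun j => j.elim0) hy)
      rw [h]
      simp
  | succ k ih =>
      rw [← (consPiEquiv k).tsum_eq]
      have hpt : ∀ p : ℕ × (Fin k → ℕ),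
          (∏ j, b ((consPiEquiv k p) j)) = b p.1 * ∏ j, b (p.2 j) := by
        intro p
        simp only [consPiEquiv, Equiv.coe_fn_mk]
        rw [Fin.prod_univ_succ, Fin.cons_zero]
        refine congrArg (fun z => b p.1 * z) (Finset.prod_congr rfl fun j _ => ?_)
        rw [Fin.cons_succ]
      rw [tsum_congr hpt, ENNReal.tsum_prod']
      calc (∑' q, ∑' g : Fin k → ℕ, b q * ∏ j, b (g j))
          = ∑' q, b q * ∑' g : Fin k → ℕ, ∏ j, b (g j) := by
            exact tsum_congr fun q => ENNReal.tsum_mul_left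
        _ = (∑' q, b q) * ∑' g : Fin k → ℕ, ∏ j, b (g j) := ENNReal.tsum_mul_right
        _ = (∑' q, b q) ^ (k + 1) := by rw [ih, pow_succ]; exact mul_comm _ _

lemma bfun_tsum_ne_top {r : ℝ} (hr : 1 < r) : (∑' q, bfun r q) ≠ ∞ := by
  have hrne : r ≠ 0 := by linarith
  have hsummable : Summable (fun q : ℕ => 1 / (q : ℝ) ^ r) :=
    Real.summable_one_div_nat_rpow.mpr hr
  have hpt : ∀ q : ℕ, bfun r q = ENNReal.ofReal (1 / (q : ℝ) ^ r) := by
    intro q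
    rcases Nat.eq_zero_or_pos q with rfl | hq
    · simp [bfun, Real.zero_rpow hrne]
    · have hq0 : (0:ℝ) < (q : ℝ) := by exact_mod_cast hq
      have hqr : (0:ℝ) < (q : ℝ) ^ r := Real.rpow_pos_of_pos hq0 r
      rw [bfun, if_neg (by omega), one_div, ENNReal.ofReal_inv_of_pos hqr,
        ← ENNReal.ofReal_rpow_of_pos hq0, ENNReal.ofReal_natCast]
  rw [tsum_congr hpt, ← ENNReal.ofReal_tsum_of_nonneg (fun q => by positivity) hsummable]
  exact ENNReal.ofReal_ne_top

lemma ZF_ne_top (s : List ℕ) (hs : Adm s) : ZF s ≠ ∞ := by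
  rcases eq_or_ne s [] with rfl | hne
  · rw [ZF_nil]; exact ENNReal.one_ne_top
  have hk1 : 1 ≤ s.length := by
    rcases s with _ | ⟨a, s'⟩
    · exact absurd rfl hne
    · simp
  set r : ℝ := 1 + 1 / (s.length : ℝ) with hrdef
  have hr : 1 < r := by
    rw [hrdef]
    have : (0:ℝ) < 1 / (s.length : ℝ) := by positivity
    linarith
  have hbound : ZF s ≤ (∑' q, bfun r q) ^ s.length := by
    calc ZF s ≤ ∑' n : STy s, ∏ j : Fin s.length, bfun r (n.1 j) := by
          refine ENNReal.tsum_le_tsum fun n => ?_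
          refine (F_le_bound s hs n).trans (le_of_eq ?_)
          refine Finset.prod_congr rfl fun j _ => ?_
          rw [bfun, if_neg (by have := n.2.2 j; omega)]
      _ ≤ ∑' f : Fin s.length → ℕ, ∏ j, bfun r (f j) :=
          ENNReal.tsum_comp_le_tsum_of_injective
            (f := (Subtype.val : STy s → (Fin s.length → ℕ)))
            Subtype.val_injective (fun f : Fin s.length → ℕ => ∏ j, bfun r (f j))
      _ = (∑' q, bfun r q) ^ s.length := tsum_pi_prod _ _
  exact ne_top_of_le_ne_top (ENNReal.pow_ne_top (bfun_tsum_ne_top hr)) hbound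

end StuffleAux

/-- ** Statement 19 **: for admissible lists `u` and `v`, the defining series of `ζ(u)` and
`ζ(v)` are summable, the stuffle product `st u v` is supported on admissible lists, and
`ζ(u) ζ(v) = ζ̄(st u v)`. -/
theorem zeta_mul_eq_zetaBar_stuffle (u v : List ℕ) (hu : Adm u) (hv : Adm v) :
    Summable (zetaTerm u) ∧ Summable (zetaTerm v) ∧
    (∀ l ∈ (st u v).support, Adm l) ∧
    zeta u * zeta v = zetaBar (st u v) := by
  have hsum : ∀ s, Adm s → Summable (zetaTerm s) := by
    intro s hs
    have h : zetaTerm s = fun n => (StuffleAux.F s n).toReal :=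
      funext (StuffleAux.zetaTerm_eq s)
    rw [h]
    exact ENNReal.summable_toReal (f := StuffleAux.F s) (StuffleAux.ZF_ne_top s hs)
  have hzeta : ∀ s, zeta s = (StuffleAux.ZF s).toReal := by
    intro s
    rw [zeta, StuffleAux.ZF, ENNReal.tsum_toReal_eq (fun n => StuffleAux.F_ne_top s n)]
    exact tsum_congr fun n => StuffleAux.zetaTerm_eq s n
  have hadm := StuffleAux.st_support_adm u v hu hv
  refine ⟨hsum u hu, hsum v hv, hadm, ?_⟩
  have hZl : ∀ l ∈ (StuffleAux.stN u v).support, StuffleAux.ZF l ≠ ∞ := by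
    intro l hl
    exact StuffleAux.ZF_ne_top l (hadm l (by rwa [StuffleAux.support_st]))
  rw [hzeta, hzeta, ← ENNReal.toReal_mul, StuffleAux.keyInf u v, zetaBar]
  simp only [Finsupp.sum]
  rw [ENNReal.toReal_sum
    (fun l hl => ENNReal.mul_ne_top (ENNReal.natCast_ne_top _) (hZl l hl))]
  rw [StuffleAux.support_st]
  refine Finset.sum_congr rfl fun l hl => ?_
  rw [ENNReal.toReal_mul, ENNReal.toReal_natCast, StuffleAux.st_apply, hzeta]
  push_cast
  ring
end
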